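/- For any real K > 0 and any state ρ on a bipartite system, min(1, 1/K) ≤ F_Γ(ρ;K) ≤ min(1, Tr|ρ^Γ|/K). -/

import Mathlib

open Matrix Filter
open scoped ComplexOrder

set_option linter.unusedSectionVars false
noncomputable section

/-- Partial transpose on the second tensor factor:
`ptrans M ((i,j),(k,l)) = M ((i,l),(k,j))`. -/
def ptrans {ι κ : Type*} (M : Matrix (ι × κ) (ι × κ) ℂ) : Matrix (ι × κ) (ι × κ) ℂ :=
  fun x y => M (x.1, y.2) (y.1, x.2)

/-- Fidelity of `K`-state p.p.t. distillation:
the supremum of `Tr(Fρ)` over Hermitian `F` with `0 ≤ F ≤ 1` and `-1/K ≤ F^Γ ≤ 1/K`. -/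
def FGamma {ι κ : Type*} [Fintype ι] [Fintype κ] [DecidableEq ι] [DecidableEq κ]
    (ρ : Matrix (ι × κ) (ι × κ) ℂ) (K : ℝ) : ℝ :=
  sSup {x : ℝ | ∃ F : Matrix (ι × κ) (ι × κ) ℂ,
    F.PosSemidef ∧ (1 - F).PosSemidef ∧
    (((1 / K : ℝ) : ℂ) • 1 - ptrans F).PosSemidef ∧
    (ptrans F + ((1 / K : ℝ) : ℂ) • 1).PosSemidef ∧
    x = ((F * ρ).trace).re}

/-- Trace of the positive part of a Hermitian matrix: `Tr(A₊) = ∑ᵢ max(λᵢ, 0)`. -/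
def tracePos {n : Type*} [Fintype n] [DecidableEq n] (A : Matrix n n ℂ) : ℝ :=
  if h : A.IsHermitian then ∑ i, max (h.eigenvalues i) 0 else 0

/-- Trace norm of a Hermitian matrix: `Tr|A| = ∑ᵢ |λᵢ|`. -/
def traceAbs {n : Type*} [Fintype n] [DecidableEq n] (A : Matrix n n ℂ) : ℝ :=
  if h : A.IsHermitian then ∑ i, |h.eigenvalues i| else 0

section Aux
variable {n : Type*} [Fintype n] [DecidableEq n]

lemma psd_smul_one {r : ℝ} (hr : 0 ≤ r) :
    (((r : ℂ)) • (1 : Matrix n n ℂ)).PosSemidef := by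
  rw [smul_one_eq_diagonal]
  exact posSemidef_diagonal_iff.mpr fun i => Complex.zero_le_real.mpr hr

lemma psd_trace_nonneg {A : Matrix n n ℂ} (hA : A.PosSemidef) : 0 ≤ A.trace := by
  refine Finset.sum_nonneg fun i _ => ?_
  exact hA.diag_nonneg

open scoped MatrixOrder in
lemma trace_mul_psd_nonneg {A B : Matrix n n ℂ} (hA : A.PosSemidef) (hB : B.PosSemidef) :
    0 ≤ (A * B).trace := by
  have hs := (CFC.sqrt_nonneg A).posSemidef
  have h2 : (A * B).trace = (CFC.sqrt A * B * CFC.sqrt A).trace := by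
    rw [trace_mul_cycle, CFC.sqrt_mul_sqrt_self A hA.nonneg]
  rw [h2]
  have := hB.conjTranspose_mul_mul_same (CFC.sqrt A)
  rw [hs.1] at this
  exact psd_trace_nonneg this

lemma trace_mul_psd_re_nonneg {A B : Matrix n n ℂ} (hA : A.PosSemidef) (hB : B.PosSemidef) :
    0 ≤ ((A * B).trace).re :=
  (Complex.le_def.mp (trace_mul_psd_nonneg hA hB)).1

/-- Decomposition of a Hermitian matrix into positive and negative parts. -/
lemma herm_decomp {A : Matrix n n ℂ} (hA : A.IsHermitian) :
    ∃ P N : Matrix n n ℂ, P.PosSemidef ∧ N.PosSemidef ∧ A = P - N ∧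
      P.trace = ((∑ i, max (hA.eigenvalues i) 0 : ℝ) : ℂ) ∧
      N.trace = ((∑ i, max (-hA.eigenvalues i) 0 : ℝ) : ℂ) := by
  set U : Matrix n n ℂ := (hA.eigenvectorUnitary : Matrix n n ℂ) with hUdef
  have hU : star U * U = 1 := mem_unitaryGroup_iff'.mp (hA.eigenvectorUnitary).2
  refine ⟨U * diagonal (fun i => ((max (hA.eigenvalues i) 0 : ℝ) : ℂ)) * star U,
          U * diagonal (fun i => ((max (-hA.eigenvalues i) 0 : ℝ) : ℂ)) * star U,
          ?_, ?_, ?_, ?_, ?_⟩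
  · simpa [Matrix.star_eq_conjTranspose] using
      (posSemidef_diagonal_iff.mpr
        (fun i => Complex.zero_le_real.mpr (le_max_right _ _))).mul_mul_conjTranspose_same U
  · simpa [Matrix.star_eq_conjTranspose] using
      (posSemidef_diagonal_iff.mpr
        (fun i => Complex.zero_le_real.mpr (le_max_right _ _))).mul_mul_conjTranspose_same U
  · conv_lhs => rw [hA.spectral_theorem, Unitary.conjStarAlgAut_apply]
    rw [← sub_mul, ← mul_sub, diagonal_sub]
    have hfun : (RCLike.ofReal ∘ hA.eigenvalues : n → ℂ)
        = fun i => ((max (hA.eigenvalues i) 0 : ℝ) : ℂ) - ((max (-hA.eigenvalues i) 0 : ℝ) : ℂ) := by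
      funext i
      show ((hA.eigenvalues i : ℝ) : ℂ) = _
      norm_cast
      exact (max_zero_sub_max_neg_zero_eq_self _).symm
    rw [hfun]
  · rw [trace_mul_cycle, hU, one_mul, trace_diagonal]
    push_cast
    rfl
  · rw [trace_mul_cycle, hU, one_mul, trace_diagonal]
    push_cast
    rfl

end Aux

section Ptrans
variable {ι κ : Type*} [Fintype ι] [Fintype κ] [DecidableEq ι] [DecidableEq κ]

lemma ptrans_one : ptrans (1 : Matrix (ι × κ) (ι × κ) ℂ) = 1 := by
  ext x y
  simp only [ptrans, one_apply, Prod.ext_iff]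
  by_cases h1 : x.1 = y.1 <;> by_cases h2 : x.2 = y.2 <;> simp [h1, h2, eq_comm]

lemma ptrans_smul (c : ℂ) (M : Matrix (ι × κ) (ι × κ) ℂ) :
    ptrans (c • M) = c • ptrans M := rfl

lemma ptrans_isHermitian {M : Matrix (ι × κ) (ι × κ) ℂ} (hM : M.IsHermitian) :
    (ptrans M).IsHermitian := by
  ext x y
  show star (ptrans M y x) = ptrans M x y
  exact hM.apply _ _

lemma trace_mul_eq_sum {m : Type*} [Fintype m] (M N : Matrix m m ℂ) :
    (M * N).trace = ∑ p : m × m, M p.1 p.2 * N p.2 p.1 := by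
  simp [Matrix.trace, Matrix.diag, mul_apply, Fintype.sum_prod_type]

def pswap (ι κ : Type*) : (ι × κ) × (ι × κ) ≃ (ι × κ) × (ι × κ) where
  toFun p := ((p.1.1, p.2.2), (p.2.1, p.1.2))
  invFun p := ((p.1.1, p.2.2), (p.2.1, p.1.2))
  left_inv _ := rfl
  right_inv _ := rfl

lemma trace_ptrans_mul (A B : Matrix (ι × κ) (ι × κ) ℂ) :
    (ptrans A * ptrans B).trace = (A * B).trace := by
  rw [trace_mul_eq_sum, trace_mul_eq_sum]
  exact Fintype.sum_equiv (pswap ι κ) _ _ (fun p => rfl)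

end Ptrans

/-- `min(1, 1/K) ≤ F_Γ(ρ;K) ≤ min(1, Tr|ρ^Γ|/K)`. -/
theorem FGamma_negativity_bounds {a b : ℕ}
    (ρ : Matrix (Fin a × Fin b) (Fin a × Fin b) ℂ)
    (hρ : ρ.PosSemidef) (hρtr : ρ.trace = 1) (K : ℝ) (hK : 0 < K) :
    min 1 (1 / K) ≤ FGamma ρ K ∧ FGamma ρ K ≤ min 1 (traceAbs (ptrans ρ) / K) := by
  have hσh : (ptrans ρ).IsHermitian := ptrans_isHermitian hρ.1
  set S := {x : ℝ | ∃ F : Matrix (Fin a × Fin b) (Fin a × Fin b) ℂ,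
    F.PosSemidef ∧ (1 - F).PosSemidef ∧
    (((1 / K : ℝ) : ℂ) • 1 - ptrans F).PosSemidef ∧
    (ptrans F + ((1 / K : ℝ) : ℂ) • 1).PosSemidef ∧
    x = ((F * ρ).trace).re} with hS
  -- upper bound ≤ 1
  have hub1 : ∀ x ∈ S, x ≤ 1 := by
    rintro x ⟨F, hF, hF1, hG1, hG2, rfl⟩
    have h1 := trace_mul_psd_re_nonneg hF1 hρ
    have h2 : ((1 - F) * ρ).trace = 1 - (F * ρ).trace := by
      rw [sub_mul, trace_sub, one_mul, hρtr]
    rw [h2] at h1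
    have := Complex.sub_re 1 ((F * ρ).trace)
    simp only [Complex.one_re] at this
    linarith [this ▸ h1]
  -- upper bound ≤ traceAbs / K
  have hub2 : ∀ x ∈ S, x ≤ traceAbs (ptrans ρ) / K := by
    rintro x ⟨F, hF, hF1, hG1, hG2, rfl⟩
    obtain ⟨P, N, hP, hN, hPN, hPt, hNt⟩ := herm_decomp hσh
    set G := ptrans F with hGdef
    -- Tr(Fρ) = Tr(G σ)
    have hswap : ((F * ρ).trace) = (G * (P - N)).trace := by
      rw [← hPN, hGdef, trace_ptrans_mul]
    -- Tr(G P) ≤ (1/K) Tr P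
    have hGP : ((G * P).trace).re ≤ (1 / K) * (∑ i, max (hσh.eigenvalues i) 0) := by
      have h0 := trace_mul_psd_re_nonneg hG1 hP
      have he : ((((1 / K : ℝ) : ℂ) • 1 - G) * P).trace
          = ((1 / K : ℝ) : ℂ) * P.trace - (G * P).trace := by
        rw [sub_mul, trace_sub, smul_mul_assoc, one_mul, trace_smul, smul_eq_mul]
      rw [he, hPt, show ((1 / K : ℝ) : ℂ) * ((∑ i, max (hσh.eigenvalues i) 0 : ℝ) : ℂ)
          = (((1 / K) * ∑ i, max (hσh.eigenvalues i) 0 : ℝ) : ℂ) by push_cast; ring] at h0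
      rw [Complex.sub_re, Complex.ofReal_re] at h0
      linarith
    -- Tr(G N) ≥ -(1/K) Tr N
    have hGN : -((1 / K) * (∑ i, max (-hσh.eigenvalues i) 0)) ≤ ((G * N).trace).re := by
      have h0 := trace_mul_psd_re_nonneg hG2 hN
      have he : ((G + ((1 / K : ℝ) : ℂ) • 1) * N).trace
          = (G * N).trace + ((1 / K : ℝ) : ℂ) * N.trace := by
        rw [add_mul, trace_add, smul_mul_assoc, one_mul, trace_smul, smul_eq_mul]
      rw [he, hNt, show ((1 / K : ℝ) : ℂ) * ((∑ i, max (-hσh.eigenvalues i) 0 : ℝ) : ℂ)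
          = (((1 / K) * ∑ i, max (-hσh.eigenvalues i) 0 : ℝ) : ℂ) by push_cast; ring] at h0
      rw [Complex.add_re, Complex.ofReal_re] at h0
      linarith
    have hdist : ((F * ρ).trace).re = ((G * P).trace).re - ((G * N).trace).re := by
      rw [hswap, mul_sub, trace_sub, Complex.sub_re]
    have habs : traceAbs (ptrans ρ)
        = (∑ i, max (hσh.eigenvalues i) 0) + (∑ i, max (-hσh.eigenvalues i) 0) := by
      rw [traceAbs, dif_pos hσh, ← Finset.sum_add_distrib]
      exact Finset.sum_congr rfl fun i _ => (max_zero_add_max_neg_zero_eq_abs_self _).symm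
    rw [hdist, habs]
    have hring : ((∑ i, max (hσh.eigenvalues i) 0) + ∑ i, max (-hσh.eigenvalues i) 0) / K
        = 1 / K * (∑ i, max (hσh.eigenvalues i) 0)
          + 1 / K * (∑ i, max (-hσh.eigenvalues i) 0) := by ring
    rw [hring]
    linarith
  -- traceAbs nonneg
  have hta : 0 ≤ traceAbs (ptrans ρ) := by
    rw [traceAbs, dif_pos hσh]
    exact Finset.sum_nonneg fun i _ => abs_nonneg _
  -- membership of min 1 (1/K)
  set c : ℝ := min 1 (1 / K) with hc
  have hc0 : 0 ≤ c := le_min zero_le_one (by positivity)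
  have hc1 : c ≤ 1 := min_le_left _ _
  have hcK : c ≤ 1 / K := min_le_right _ _
  have hmem : c ∈ S := by
    refine ⟨((c : ℂ)) • 1, psd_smul_one hc0, ?_, ?_, ?_, ?_⟩
    · have : (1 : Matrix (Fin a × Fin b) (Fin a × Fin b) ℂ) - ((c : ℂ)) • 1
          = (((1 - c : ℝ) : ℂ)) • 1 := by
        push_cast; rw [sub_smul, one_smul]
      rw [this]; exact psd_smul_one (by linarith)
    · rw [ptrans_smul, ptrans_one]
      have : ((1 / K : ℝ) : ℂ) • (1 : Matrix (Fin a × Fin b) (Fin a × Fin b) ℂ)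
          - ((c : ℂ)) • 1 = (((1 / K - c : ℝ) : ℂ)) • 1 := by
        push_cast; rw [sub_smul]
      rw [this]; exact psd_smul_one (by linarith)
    · rw [ptrans_smul, ptrans_one]
      have : ((c : ℂ)) • (1 : Matrix (Fin a × Fin b) (Fin a × Fin b) ℂ)
          + ((1 / K : ℝ) : ℂ) • 1 = (((c + 1 / K : ℝ) : ℂ)) • 1 := by
        push_cast; rw [add_smul]
      rw [this]; exact psd_smul_one (by positivity)
    · have h1 : ((c : ℂ)) • (1 : Matrix (Fin a × Fin b) (Fin a × Fin b) ℂ) * ρ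
          = ((c : ℂ)) • ρ := by rw [smul_mul_assoc, one_mul]
      rw [h1, trace_smul, hρtr, smul_eq_mul, mul_one, Complex.ofReal_re]
  have hbdd : BddAbove S := ⟨1, fun x hx => hub1 x hx⟩
  constructor
  · exact le_csSup hbdd hmem
  · refine Real.sSup_le (fun x hx => le_min (hub1 x hx) (hub2 x hx)) ?_
    exact le_min zero_le_one (div_nonneg hta hK.le)
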